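/- Let I ⊆ ℝ be an open interval, f, g : I → ℝ continuous, let F : I → ℝ be an antiderivative of x ↦ f(x) + x·g(x), set E(x) := e^{F(x)}, and let G : I → ℝ be an antiderivative of x ↦ g(x)·E(x). Define η(x,s) := (x − s²)/(E(x) − (x − s²)·G(x)) on the set of (x,s) with x ∈ I and E(x) − (x − s²)G(x) ≠ 0. Then at every such point with s ≠ 0, η satisfies ∂₁η + (1/(2s))·[1 − (f(x)+g(x)s²)(x−s²)]·∂₂η = 0. -/

import Mathlib

open Set

noncomputable def d1 (φ : ℝ → ℝ → ℝ) (x s : ℝ) : ℝ := deriv (fun t => φ t s) x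

noncomputable def d2 (φ : ℝ → ℝ → ℝ) (x s : ℝ) : ℝ := deriv (fun t => φ x t) s

/-- η(x,s) = (x−s²)/(E(x) − (x−s²)G(x)), with E = e^F, F' = f + x·g,
G' = g·E, solves the transport equation η₁ + (1/(2s))[1 − (f+gs²)(x−s²)]η₂ = 0 at
points where the denominator does not vanish and s ≠ 0. -/
theorem stmt_4 (a b : ℝ) (f g F G : ℝ → ℝ)
    (hf : ContinuousOn f (Ioo a b)) (hg : ContinuousOn g (Ioo a b))
    (hF : ∀ x ∈ Ioo a b, HasDerivAt F (f x + x * g x) x)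
    (hG : ∀ x ∈ Ioo a b, HasDerivAt G (g x * Real.exp (F x)) x)
    (η : ℝ → ℝ → ℝ)
    (hη : ∀ x s : ℝ, η x s = (x - s ^ 2) / (Real.exp (F x) - (x - s ^ 2) * G x)) :
    ∀ x s : ℝ, x ∈ Ioo a b → Real.exp (F x) - (x - s ^ 2) * G x ≠ 0 → s ≠ 0 →
      d1 η x s + (1 / (2 * s)) * (1 - (f x + g x * s ^ 2) * (x - s ^ 2)) *
        d2 η x s = 0 := by
  intro x s hx hD hs
  set E : ℝ := Real.exp (F x) with hE
  set u : ℝ := x - s ^ 2 with hu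
  -- derivative in x
  have hu1 : HasDerivAt (fun t : ℝ => t - s ^ 2) 1 x := by
    simpa using (hasDerivAt_id x).sub_const (s ^ 2)
  have hExp : HasDerivAt (fun t => Real.exp (F t)) (Real.exp (F x) * (f x + x * g x)) x :=
    (hF x hx).exp
  have hDen : HasDerivAt (fun t => Real.exp (F t) - (t - s ^ 2) * G t)
      (Real.exp (F x) * (f x + x * g x) - (1 * G x + (x - s ^ 2) * (g x * Real.exp (F x)))) x :=
    hExp.sub (hu1.mul (hG x hx))
  have h1 : HasDerivAt (fun t => η t s)
      ((1 * (E - u * G x) -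
        u * (E * (f x + x * g x) - (1 * G x + u * (g x * E)))) / (E - u * G x) ^ 2) x := by
    have := hu1.div hDen hD
    refine HasDerivAt.congr_of_eventuallyEq (by simpa [hE, hu] using this) ?_
    filter_upwards with t
    rw [hη]; rfl
  -- derivative in s
  have hu2 : HasDerivAt (fun t : ℝ => x - t ^ 2) (-(2 * s)) s := by
    have : HasDerivAt (fun t : ℝ => t ^ 2) (2 * s) s := by
      simpa using hasDerivAt_pow 2 s
    have h := (hasDerivAt_const s x).sub this; rw [zero_sub] at h; exact h
  have hDen2 : HasDerivAt (fun t => Real.exp (F x) - (x - t ^ 2) * G x)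
      (0 - (-(2 * s)) * G x) s :=
    (hasDerivAt_const s (Real.exp (F x))).sub (hu2.mul_const (G x))
  have h2 : HasDerivAt (fun t => η x t)
      ((-(2 * s) * (E - u * G x) - u * (0 - (-(2 * s)) * G x)) / (E - u * G x) ^ 2) s := by
    have := hu2.div hDen2 hD
    refine HasDerivAt.congr_of_eventuallyEq (by simpa [hE, hu] using this) ?_
    filter_upwards with t
    rw [hη]; rfl
  rw [d1, d2, h1.deriv, h2.deriv]
  have key : E * (1 - (f x + g x * s ^ 2) * u) =
      1 * (E - u * G x) - u * (E * (f x + x * g x) - (1 * G x + u * (g x * E))) := by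
    simp only [hu]; ring
  field_simp
  linear_combination 2 * s * (E - u * G x) ^ 2 * key
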